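/- Every local clone C on a countably infinite set X is of the form Pol(R) for some set R of finitary relations on X; in fact C = Pol(Inv(C)). -/

import Mathlib

/-- A finitary operation on `X`: an `(n+1)`-ary function `X^(n+1) → X` (arities are ≥ 1). -/
abbrev FinOp (X : Type) := Σ n : ℕ, (Fin (n + 1) → X) → X

/-- A finitary relation on `X`: an `(m+1)`-ary relation `ρ ⊆ X^(m+1)` (arities are ≥ 1). -/
abbrev FinRel (X : Type) := Σ m : ℕ, Set (Fin (m + 1) → X)

variable {X : Type}

/-- `C` is a clone: it contains all projections and is closed under composition. -/
def IsClone (C : Set (FinOp X)) : Prop :=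
  (∀ (n : ℕ) (k : Fin (n + 1)), (⟨n, fun x => x k⟩ : FinOp X) ∈ C) ∧
  (∀ (n m : ℕ) (f : (Fin (n + 1) → X) → X) (g : Fin (n + 1) → (Fin (m + 1) → X) → X),
    (⟨n, f⟩ : FinOp X) ∈ C → (∀ i, (⟨m, g i⟩ : FinOp X) ∈ C) →
    (⟨m, fun x => f fun i => g i x⟩ : FinOp X) ∈ C)

/-- `C` is a local clone: a clone each of whose `n`-ary fragments is closed in the
product topology on `X^(X^n)`, where `X` carries the discrete topology. -/
def IsLocalClone (C : Set (FinOp X)) : Prop :=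
  IsClone C ∧
  ∀ n : ℕ,
    letI : TopologicalSpace X := ⊥
    IsClosed {f : (Fin (n + 1) → X) → X | (⟨n, f⟩ : FinOp X) ∈ C}

/-- The smallest local clone containing `F` (the local clone generated by `F`). -/
def cllClosure (F : Set (FinOp X)) : Set (FinOp X) :=
  ⋂₀ {C : Set (FinOp X) | IsLocalClone C ∧ F ⊆ C}

/-- `f` preserves the relation `ρ`. -/
def Preserves {n m : ℕ} (f : (Fin (n + 1) → X) → X) (ρ : Set (Fin (m + 1) → X)) : Prop :=
  ∀ r : Fin (n + 1) → Fin (m + 1) → X, (∀ i, r i ∈ ρ) → (fun j => f fun i => r i j) ∈ ρ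

/-- `Pol R`: all finitary operations preserving every relation in `R`. -/
def Polymorphisms (R : Set (FinRel X)) : Set (FinOp X) :=
  {f | ∀ ρ ∈ R, Preserves f.2 ρ.2}

/-- `Inv F`: all finitary relations invariant under every operation in `F`. -/
def Invariants (F : Set (FinOp X)) : Set (FinRel X) :=
  {ρ | ∀ f ∈ F, Preserves f.2 ρ.2}

/-- The clone of projections. -/
def projClone (X : Type) : Set (FinOp X) :=
  {f | ∃ k : Fin (f.1 + 1), f.2 = fun x => x k}

/-- Every local clone `C` on a countably infinite set is of the form `Pol R`;
in fact `C = Pol (Inv C)`. -/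
theorem localClone_eq_pol_inv (X : Type) [Countable X] [Infinite X]
    (C : Set (FinOp X)) (hC : IsLocalClone C) :
    (∃ R : Set (FinRel X), C = Polymorphisms R) ∧ C = Polymorphisms (Invariants C) := by
  have key : C = Polymorphisms (Invariants C) := by
    apply Set.Subset.antisymm
    · intro f hf ρ hρ
      exact hρ f hf
    · rintro ⟨n, g⟩ hg
      -- it suffices that g agrees with a member of C on every finite set
      have agree : ∀ (I : Set (Fin (n + 1) → X)), I.Finite →
          ∃ f, (⟨n, f⟩ : FinOp X) ∈ C ∧ ∀ x ∈ I, f x = g x := by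
        intro I hI
        rcases I.eq_empty_or_nonempty with rfl | ⟨x0, hx0⟩
        · exact ⟨fun x => x 0, hC.1.1 n 0, fun x hx => absurd hx (Set.notMem_empty x)⟩
        · -- cover I by a finite sequence
          obtain ⟨m, a, hcov⟩ : ∃ (m : ℕ) (a : Fin (m + 1) → (Fin (n + 1) → X)),
              I ⊆ Set.range a := by
            classical
            set l := hI.toFinset.toList with hl
            refine ⟨l.length, fun j => if h : (j : ℕ) < l.length then l.get ⟨j, h⟩ else x0, ?_⟩
            intro x hx
            have hmem : x ∈ l := by
              rw [hl, Finset.mem_toList, Set.Finite.mem_toFinset]; exact hx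
            obtain ⟨i, hi⟩ := List.get_of_mem hmem
            refine ⟨⟨(i : ℕ), Nat.lt_succ_of_lt i.2⟩, ?_⟩
            simp only [i.2, dif_pos]
            exact hi
          -- the invariant relation generated by the tuple a
          set ρ : Set (Fin (m + 1) → X) :=
            {y | ∃ f, (⟨n, f⟩ : FinOp X) ∈ C ∧ ∀ j, y j = f (a j)} with hρdef
          have hρinv : (⟨m, ρ⟩ : FinRel X) ∈ Invariants C := by
            rintro ⟨k, h⟩ hh r hr
            choose w hwC hw using hr
            refine ⟨fun x => h fun i => w i x, hC.1.2 k n h w hh hwC, ?_⟩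
            intro j
            simp only
            congr 1
            funext i
            exact hw i j
          have hrows : ∀ i : Fin (n + 1), (fun j => a j i) ∈ ρ :=
            fun i => ⟨fun x => x i, hC.1.1 n i, fun j => rfl⟩
          have := hg ⟨m, ρ⟩ hρinv (fun i j => a j i) hrows
          obtain ⟨f, hfC, hf⟩ := this
          refine ⟨f, hfC, ?_⟩
          intro x hx
          obtain ⟨j, rfl⟩ := hcov hx
          exact (hf j).symm
      -- locality
      letI : TopologicalSpace X := ⊥
      letI : DiscreteTopology X := ⟨rfl⟩
      have hclosed := hC.2 n
      have hmem : g ∈ closure {f : (Fin (n + 1) → X) → X | (⟨n, f⟩ : FinOp X) ∈ C} := by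
        rw [mem_closure_iff_nhds]
        intro U hU
        rw [nhds_pi] at hU
        obtain ⟨I, hIfin, t, ht, hsub⟩ := Filter.mem_pi.mp hU
        obtain ⟨f, hfC, hf⟩ := agree I hIfin
        refine ⟨f, hsub ?_, hfC⟩
        intro x hx
        have : t x ∈ nhds (g x) := by simpa using ht x
        have hgx : g x ∈ t x := mem_of_mem_nhds this
        rw [hf x hx]
        exact hgx
      rwa [hclosed.closure_eq] at hmem
  exact ⟨⟨Invariants C, key⟩, key⟩
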